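/- Let P be a probability measure on a measurable space X and let M be a finite signed measure with M ≪ P, M(X) = 1, and dM/dP ∈ L²(P). Then D₂(M‖P) = sup over f ∈ L²(P) of { ∫ f dM − E_P[f] − (1/4)·Var_P[f] }, and this supremum is attained at f = 2·(dM/dP). -/

import Mathlib

open MeasureTheory

lemma aux_int_mul {X : Type*} [MeasurableSpace X] {P : Measure X}
    {f g : X → ℝ} (hf : MemLp f 2 P) (hg : MemLp g 2 P) :
    Integrable (fun x => f x * g x) P := by
  have h1 : Integrable (fun x => (f x + g x) ^ 2) P := (hf.add hg).integrable_sq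
  have h2 : Integrable (fun x => (f x) ^ 2) P := hf.integrable_sq
  have h3 : Integrable (fun x => (g x) ^ 2) P := hg.integrable_sq
  have : Integrable (fun x => ((f x + g x) ^ 2 - (f x) ^ 2 - (g x) ^ 2) / 2) P :=
    ((h1.sub h2).sub h3).div_const 2
  exact this.congr (Filter.Eventually.of_forall fun x => by ring)

/-- Variational representation of the χ² divergence for normalized measures.
A finite signed measure `M ≪ P` with `M(X) = 1` and `dM/dP ∈ L²(P)` is encoded by its
density `m = dM/dP`.  Then `D₂(M‖P) = sup over f ∈ L²(P) of
{∫ f dM − E_P[f] − (1/4)·Var_P[f]}`, attained at `f = 2·(dM/dP)`. -/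
theorem stmt_1 {X : Type*} [MeasurableSpace X] (P : Measure X) [IsProbabilityMeasure P]
    (m : X → ℝ) (hm : MemLp m 2 P) (hm1 : (∫ x, m x ∂P) = 1)
    (D2 : ℝ) (hD2 : D2 = ∫ x, ((m x) ^ 2 - 1) ∂P)
    (obj : (X → ℝ) → ℝ)
    (hobj : obj = fun f => (∫ x, f x * m x ∂P) - (∫ x, f x ∂P)
      - (1 / 4) * ((∫ x, (f x) ^ 2 ∂P) - (∫ x, f x ∂P) ^ 2)) :
    -- the supremum is attained at `f = 2·(dM/dP)`, with value `D₂(M‖P)` ...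
    obj (fun x => 2 * m x) = D2 ∧
    -- ... and `D₂(M‖P)` is an upper bound over all `f ∈ L²(P)`
    (∀ f : X → ℝ, MemLp f 2 P → obj f ≤ D2) := by
  have hmi : Integrable m P := hm.integrable (by norm_num)
  have hm2 : Integrable (fun x => (m x) ^ 2) P := hm.integrable_sq
  have hD2' : D2 = (∫ x, (m x) ^ 2 ∂P) - 1 := by
    rw [hD2, integral_sub hm2 (integrable_const 1), integral_const]
    simp
  constructor
  · -- value at f = 2 m
    rw [hobj]
    simp only
    have e1 : (∫ x, (2 * m x) * m x ∂P) = 2 * ∫ x, (m x) ^ 2 ∂P := by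
      rw [← integral_const_mul]
      exact integral_congr_ae (Filter.Eventually.of_forall fun x => by ring)
    have e2 : (∫ x, 2 * m x ∂P) = 2 := by rw [integral_const_mul, hm1]; ring
    have e3 : (∫ x, (2 * m x) ^ 2 ∂P) = 4 * ∫ x, (m x) ^ 2 ∂P := by
      rw [← integral_const_mul]
      exact integral_congr_ae (Filter.Eventually.of_forall fun x => by ring)
    rw [e1, e2, e3, hD2']
    ring
  · intro f hf
    have hfi : Integrable f P := hf.integrable (by norm_num)
    have hf2 : Integrable (fun x => (f x) ^ 2) P := hf.integrable_sq
    have hfm : Integrable (fun x => f x * m x) P := aux_int_mul hf hm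
    set a : ℝ := ∫ x, f x ∂P with ha
    -- the three pieces of the expanded square
    have hg1 : Integrable (fun x => (m x - 1) ^ 2) P := by
      refine ((hm2.sub (hmi.const_mul 2)).add (integrable_const 1)).congr
        (Filter.Eventually.of_forall fun x => by simp; ring)
    have hg2 : Integrable (fun x => (m x - 1) * (f x - a)) P :=
      aux_int_mul (hm.sub (memLp_const 1)) (hf.sub (memLp_const a))
    have hg3 : Integrable (fun x => (f x - a) ^ 2) P :=
      (hf.sub (memLp_const a)).integrable_sq
    -- compute each piece
    have eA : (∫ x, (m x - 1) ^ 2 ∂P) = (∫ x, (m x) ^ 2 ∂P) - 1 := by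
      have : (∫ x, (m x - 1) ^ 2 ∂P)
          = ∫ x, ((m x) ^ 2 - 2 * m x + 1) ∂P :=
        integral_congr_ae (Filter.Eventually.of_forall fun x => by ring)
      have i1 : Integrable (fun x => (m x) ^ 2 - 2 * m x) P := hm2.sub (hmi.const_mul 2)
      rw [this, integral_add i1 (integrable_const 1),
        integral_sub hm2 (hmi.const_mul 2), integral_const_mul, hm1, integral_const]
      simp only [measure_univ, probReal_univ, ENNReal.toReal_one, smul_eq_mul, one_mul, mul_one]
      ring
    have eB : (∫ x, (m x - 1) * (f x - a) ∂P) = (∫ x, f x * m x ∂P) - a := by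
      have : (∫ x, (m x - 1) * (f x - a) ∂P)
          = ∫ x, (f x * m x - a * m x - f x + a) ∂P :=
        integral_congr_ae (Filter.Eventually.of_forall fun x => by ring)
      have i1 : Integrable (fun x => f x * m x - a * m x) P := hfm.sub (hmi.const_mul a)
      have i2 : Integrable (fun x => f x * m x - a * m x - f x) P := i1.sub hfi
      rw [this, integral_add i2 (integrable_const a), integral_sub i1 hfi,
        integral_sub hfm (hmi.const_mul a), integral_const_mul, hm1, integral_const]
      simp only [measure_univ, probReal_univ, ENNReal.toReal_one, smul_eq_mul, one_mul, mul_one, ← ha]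
      ring
    have eC : (∫ x, (f x - a) ^ 2 ∂P) = (∫ x, (f x) ^ 2 ∂P) - a ^ 2 := by
      have : (∫ x, (f x - a) ^ 2 ∂P)
          = ∫ x, ((f x) ^ 2 - 2 * a * f x + a ^ 2) ∂P :=
        integral_congr_ae (Filter.Eventually.of_forall fun x => by ring)
      have i1 : Integrable (fun x => (f x) ^ 2 - 2 * a * f x) P := hf2.sub (hfi.const_mul (2 * a))
      rw [this, integral_add i1 (integrable_const _),
        integral_sub hf2 (hfi.const_mul (2 * a)), integral_const_mul, integral_const]
      simp only [measure_univ, probReal_univ, ENNReal.toReal_one, smul_eq_mul, one_mul, mul_one, ← ha]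
      ring
    have key : 0 ≤ ∫ x, ((m x - 1) - (f x - a) / 2) ^ 2 ∂P :=
      integral_nonneg fun x => sq_nonneg _
    have expand : (∫ x, ((m x - 1) - (f x - a) / 2) ^ 2 ∂P)
        = (∫ x, (m x - 1) ^ 2 ∂P) - (∫ x, (m x - 1) * (f x - a) ∂P)
          + (1 / 4) * (∫ x, (f x - a) ^ 2 ∂P) := by
      have : (∫ x, ((m x - 1) - (f x - a) / 2) ^ 2 ∂P)
          = ∫ x, ((m x - 1) ^ 2 - (m x - 1) * (f x - a) + (1 / 4) * (f x - a) ^ 2) ∂P :=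
        integral_congr_ae (Filter.Eventually.of_forall fun x => by ring)
      have i1 : Integrable (fun x => (m x - 1) ^ 2 - (m x - 1) * (f x - a)) P := hg1.sub hg2
      have i2 : Integrable (fun x => (1 / 4 : ℝ) * (f x - a) ^ 2) P := hg3.const_mul (1 / 4)
      rw [this, integral_add i1 i2, integral_sub hg1 hg2, integral_const_mul]
    rw [expand, eA, eB, eC] at key
    rw [hobj]
    simp only [← ha]
    linarith
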